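/- Let M be the structure monoid of a finite RC-quasigroup of size n and class p ≥ 2, and Δ = ν(∏_{x∈X} x^{p-1}). Then the set of left-divisors of Δ coincides with the set of right-divisors of Δ, and Δ is a Garside element of M (its divisors are finite in number and generate M, since every element of X divides Δ). -/

import Mathlib

/-- `PiAux op l y` is `Π_{r+1}(x₁, ..., x_r, y)` where `l = [x_r, ..., x₁]`. -/
def PiAux {X : Type*} (op : X → X → X) : List X → X → X
  | [], y => y
  | a :: l, y => op (PiAux op l a) (PiAux op l y)

/-- `SigmaRev op l` is the list of letters of the word `Σ_r(x₁, ..., x_r)` for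
`l = [x_r, ..., x₁]` the reversed argument list. -/
def SigmaRev {X : Type*} (op : X → X → X) : List X → List X
  | [] => []
  | a :: l => SigmaRev op l ++ [PiAux op l a]

/-- The defining relations `x(x ⊳ y) = y(y ⊳ x)` of the structure monoid of `(X, ⊳)`. -/
def structRels {X : Type*} (op : X → X → X) : FreeMonoid X → FreeMonoid X → Prop :=
  fun a b => ∃ x y : X,
    a = FreeMonoid.of x * FreeMonoid.of (op x y) ∧ b = FreeMonoid.of y * FreeMonoid.of (op y x)

namespace Stmt13Aux

set_option linter.unusedSectionVars false

/-! ### A semidirect-product monoid `(X → ℕ) ⋊ Perm X` -/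

@[ext] structure SD (X : Type*) where
  vec : X → ℕ
  perm : Equiv.Perm X

namespace SD

variable {X : Type*}

instance : One (SD X) := ⟨⟨0, 1⟩⟩
instance : Mul (SD X) := ⟨fun a b => ⟨a.vec + fun z => b.vec (a.perm⁻¹ z), a.perm * b.perm⟩⟩

@[simp] lemma one_vec : (1 : SD X).vec = 0 := rfl
@[simp] lemma one_perm : (1 : SD X).perm = 1 := rfl
@[simp] lemma mul_vec (a b : SD X) :
    (a * b).vec = a.vec + fun z => b.vec (a.perm⁻¹ z) := rfl
@[simp] lemma mul_perm (a b : SD X) : (a * b).perm = a.perm * b.perm := rfl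

instance : Monoid (SD X) where
  mul_assoc a b c := by
    ext z
    · simp [mul_inv_rev, Equiv.Perm.mul_apply, add_assoc]
    · simp [mul_assoc]
  one_mul a := by ext z <;> simp
  mul_one a := by ext z <;> simp

end SD

/-! ### Basic notations for the structure monoid -/

variable {X : Type*} [DecidableEq X]

/-- The permutation `(op x)⁻¹`. -/
noncomputable def sPerm (op : X → X → X) (hL : ∀ x : X, Function.Bijective (op x)) (x : X) :
    Equiv.Perm X :=
  (Equiv.ofBijective (op x) (hL x)).symm

lemma sPerm_inv_apply (op : X → X → X) (hL : ∀ x : X, Function.Bijective (op x)) (x z : X) :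
    (sPerm op hL x)⁻¹ z = op x z := rfl

/-- The homomorphism from the structure monoid to the semidirect product. -/
noncomputable def phiH (op : X → X → X) (hRC : ∀ x y z : X, op (op x y) (op x z) = op (op y x) (op y z))
    (hL : ∀ x : X, Function.Bijective (op x)) :
    PresentedMonoid (structRels op) →* SD X :=
  PresentedMonoid.lift (fun x => ⟨Pi.single x 1, sPerm op hL x⟩) (by
    rintro a b ⟨x, y, rfl, rfl⟩
    rw [map_mul, map_mul, FreeMonoid.lift_eval_of, FreeMonoid.lift_eval_of,
      FreeMonoid.lift_eval_of, FreeMonoid.lift_eval_of]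
    apply SD.ext
    · funext z
      simp only [SD.mul_vec, Pi.add_apply, sPerm_inv_apply]
      have h1 : (Pi.single (M := fun _ => ℕ) (op x y) 1) (op x z) = (Pi.single (M := fun _ => ℕ) y 1) z := by
        rw [Pi.single_apply, Pi.single_apply]
        simp [(hL x).injective.eq_iff]
      have h2 : (Pi.single (M := fun _ => ℕ) (op y x) 1) (op y z) = (Pi.single (M := fun _ => ℕ) x 1) z := by
        rw [Pi.single_apply, Pi.single_apply]
        simp [(hL y).injective.eq_iff]
      rw [h1, h2, add_comm]
    · simp only [SD.mul_perm]
      rw [← inv_inj]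
      ext z
      simp only [mul_inv_rev, Equiv.Perm.mul_apply, sPerm_inv_apply]
      exact hRC x y z)

@[simp] lemma phiH_of (op : X → X → X) (hRC : ∀ x y z : X, op (op x y) (op x z)
    = op (op y x) (op y z)) (hL : ∀ x : X, Function.Bijective (op x)) (x : X) :
    phiH op hRC hL (PresentedMonoid.of (structRels op) x) = ⟨Pi.single x 1, sPerm op hL x⟩ :=
  rfl

/-! ### RC-calculus: iterated operations and the elements `E k x` -/

section RC

variable {X : Type*} [DecidableEq X] {op : X → X → X}

/-- `eE k x = e_k(x)`, the `k`-th iterate of `x ↦ x ⊳ x`. -/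
def eE (op : X → X → X) (k : ℕ) (x : X) : X := PiAux op (List.replicate k x) x

/-- `piE k x y = Π_{k+1}(x, ..., x, y)`. -/
def piE (op : X → X → X) (k : ℕ) (x : X) (y : X) : X := PiAux op (List.replicate k x) y

@[simp] lemma piE_zero (x y : X) : piE op 0 x y = y := rfl
@[simp] lemma eE_zero (x : X) : eE op 0 x = x := rfl
lemma piE_succ (k : ℕ) (x y : X) : piE op (k+1) x y = op (eE op k x) (piE op k x y) := rfl
lemma eE_succ (k : ℕ) (x : X) : eE op (k+1) x = op (eE op k x) (eE op k x) := rfl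
lemma piE_self (k : ℕ) (x : X) : piE op k x x = eE op k x := rfl

variable (p : ℕ)

lemma piE_class (hclass : ∀ x y : X, PiAux op (List.replicate p x) y = y) (x y : X) :
    piE op p x y = y := hclass x y

lemma eE_class (hclass : ∀ x y : X, PiAux op (List.replicate p x) y = y) (x : X) :
    eE op p x = x := hclass x x

lemma eE_add_p (hclass : ∀ x y : X, PiAux op (List.replicate p x) y = y) (j : ℕ) (x : X) : eE op (j + p) x = eE op j x := by
  induction j with
  | zero => simpa using eE_class p hclass x
  | succ j ih =>
      have : j + 1 + p = (j + p) + 1 := by omega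
      rw [this, eE_succ, ih, eE_succ]

lemma eE_add_mul_p (hclass : ∀ x y : X, PiAux op (List.replicate p x) y = y) (j k : ℕ) (x : X) : eE op (j + k * p) x = eE op j x := by
  induction k with
  | zero => simp
  | succ k ih =>
      have : j + (k+1) * p = (j + k * p) + p := by ring
      rw [this, eE_add_p p hclass, ih]

lemma piE_bijective (hL : ∀ x : X, Function.Bijective (op x)) (k : ℕ) (x : X) :
    Function.Bijective (fun y => piE op k x y) := by
  induction k with
  | zero => exact Function.bijective_id
  | succ k ih =>
      have : (fun y => piE op (k+1) x y) = (op (eE op k x)) ∘ (fun y => piE op k x y) := rfl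
    
      rw [this]
      exact (hL _).comp ih

lemma dag (hRC : ∀ x y z : X, op (op x y) (op x z) = op (op y x) (op y z)) (k : ℕ) (x y : X) :
    op (piE op k x y) (eE op k x) = eE op k (op y x) := by
  induction k with
  | zero => rfl
  | succ k ih =>
      rw [piE_succ, eE_succ, hRC (eE op k x) (piE op k x y) (eE op k x), ih, eE_succ]

/-- The element `E k x = e_0(x) e_1(x) ⋯ e_{k-1}(x)` of the structure monoid. -/
def Eel (op : X → X → X) (k : ℕ) (x : X) : PresentedMonoid (structRels op) :=
  ((List.range k).map (fun j => PresentedMonoid.of (structRels op) (eE op j x))).prod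

@[simp] lemma Eel_zero (x : X) : Eel op 0 x = 1 := rfl

lemma Eel_succ (k : ℕ) (x : X) :
    Eel op (k+1) x = Eel op k x * PresentedMonoid.of (structRels op) (eE op k x) := by
  unfold Eel
  rw [List.range_succ]
  simp

/-- The defining relation in the structure monoid. -/
lemma mrel (x y : X) :
    PresentedMonoid.of (structRels op) x * PresentedMonoid.of (structRels op) (op x y)
      = PresentedMonoid.of (structRels op) y * PresentedMonoid.of (structRels op) (op y x) :=
  Quotient.sound (ConGen.Rel.of _ _ ⟨x, y, rfl, rfl⟩)

lemma qc (hRC : ∀ x y z : X, op (op x y) (op x z) = op (op y x) (op y z)) (k : ℕ) (x y : X) :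
    Eel op k x * PresentedMonoid.of (structRels op) (piE op k x y)
      = PresentedMonoid.of (structRels op) y * Eel op k (op y x) := by
  induction k with
  | zero => rw [piE_zero, Eel_zero, Eel_zero, one_mul, mul_one]
  | succ k ih =>
      rw [Eel_succ, Eel_succ, piE_succ, mul_assoc,
        mrel (eE op k x) (piE op k x y), dag hRC, ← mul_assoc, ih, mul_assoc]

lemma qcp (hclass : ∀ x y : X, PiAux op (List.replicate p x) y = y)
    (hRC : ∀ x y z : X, op (op x y) (op x z) = op (op y x) (op y z)) (x y : X) :
    Eel op p x * PresentedMonoid.of (structRels op) y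
      = PresentedMonoid.of (structRels op) y * Eel op p (op y x) := by
  have := qc hRC p x y
  rwa [piE_class p hclass] at this

lemma emove (hclass : ∀ x y : X, PiAux op (List.replicate p x) y = y)
    (hRC : ∀ x y z : X, op (op x y) (op x z) = op (op y x) (op y z)) (k : ℕ) (a c : X) :
    Eel op p c * Eel op k a = Eel op k a * Eel op p (piE op k a c) := by
  induction k with
  | zero => rw [piE_zero, Eel_zero, one_mul, mul_one]
  | succ k ih =>
      rw [Eel_succ, ← mul_assoc, ih, mul_assoc, mul_assoc, piE_succ,
        ← qcp p hclass hRC (piE op k a c) (eE op k a)]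

lemma ecomm (hclass : ∀ x y : X, PiAux op (List.replicate p x) y = y)
    (hRC : ∀ x y z : X, op (op x y) (op x z) = op (op y x) (op y z)) (a c : X) :
    Commute (Eel op p c) (Eel op p a) := by
  have := emove p hclass hRC p a c
  rwa [piE_class p hclass] at this

end RC

/-! ### Computations of `phiH` on the elements `Eel`, and the length function -/

section Phi

variable {X : Type*} [DecidableEq X] {op : X → X → X}
  (hRC : ∀ x y z : X, op (op x y) (op x z) = op (op y x) (op y z))
  (hL : ∀ x : X, Function.Bijective (op x))

lemma phiH_Eel (k : ℕ) (x : X) :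
    (phiH op hRC hL (Eel op k x)).vec = Pi.single x k ∧
      ∀ z, ((phiH op hRC hL (Eel op k x)).perm)⁻¹ z = piE op k x z := by
  induction k with
  | zero =>
      constructor
      · show (phiH op hRC hL 1).vec = Pi.single x 0
        rw [map_one, Pi.single_zero]
        rfl
      · intro z
        show ((phiH op hRC hL 1).perm)⁻¹ z = z
        rw [map_one]
        rfl
  | succ k ih =>
      rw [Eel_succ, map_mul, phiH_of]
      constructor
      · funext z
        simp only [SD.mul_vec, Pi.add_apply]
        rw [ih.1, ih.2 z]
        have hz : (Pi.single (M := fun _ => ℕ) (eE op k x) 1) (piE op k x z)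
            = (Pi.single (M := fun _ => ℕ) x 1) z := by
          rcases eq_or_ne z x with rfl | hne
          · rw [piE_self, Pi.single_eq_same, Pi.single_eq_same]
          · have hnn : piE op k x z ≠ eE op k x := by
              intro h
              exact hne ((piE_bijective hL k x).injective (h.trans (piE_self k x).symm))
            rw [Pi.single_eq_of_ne hnn, Pi.single_eq_of_ne hne]
        rw [hz, Pi.single_apply, Pi.single_apply, Pi.single_apply]
        by_cases h : z = x <;> simp [h]
      · intro z
        simp only [SD.mul_perm, mul_inv_rev, Equiv.Perm.mul_apply]
        rw [ih.2 z, sPerm_inv_apply, piE_succ]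

lemma phiH_Eel_vec (k : ℕ) (x : X) :
    (phiH op hRC hL (Eel op k x)).vec = Pi.single x k := (phiH_Eel hRC hL k x).1

lemma phiH_Eel_perm_one (p : ℕ) (hclass : ∀ x y : X, PiAux op (List.replicate p x) y = y)
    (x : X) : (phiH op hRC hL (Eel op p x)).perm = 1 := by
  rw [← inv_eq_one]
  ext z
  rw [(phiH_Eel hRC hL p x).2 z, piE_class p hclass]
  rfl

variable [Fintype X]

/-- The length function on the structure monoid. -/
noncomputable def ell (m : PresentedMonoid (structRels op)) : ℕ :=
  ∑ z, (phiH op hRC hL m).vec z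

lemma ell_one : ell hRC hL (1 : PresentedMonoid (structRels op)) = 0 := by
  simp [ell, map_one]

lemma ell_mul (a b : PresentedMonoid (structRels op)) :
    ell hRC hL (a * b) = ell hRC hL a + ell hRC hL b := by
  unfold ell
  rw [map_mul]
  simp only [SD.mul_vec, Pi.add_apply]
  rw [Finset.sum_add_distrib]
  congr 1
  exact Equiv.sum_comp ((phiH op hRC hL a).perm)⁻¹ fun z => (phiH op hRC hL b).vec z

lemma ell_of (x : X) : ell hRC hL (PresentedMonoid.of (structRels op) x) = 1 := by
  simp [ell, phiH_of, Pi.single_apply]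

lemma ell_pow (m : PresentedMonoid (structRels op)) (k : ℕ) :
    ell hRC hL (m ^ k) = k * ell hRC hL m := by
  induction k with
  | zero => simpa using ell_one hRC hL
  | succ k ih => rw [pow_succ, ell_mul, ih]; ring

lemma ell_Eel (k : ℕ) (x : X) : ell hRC hL (Eel op k x) = k := by
  unfold ell
  rw [phiH_Eel_vec]
  simp [Pi.single_apply]

lemma ell_mk (w : FreeMonoid X) :
    ell hRC hL (PresentedMonoid.mk (structRels op) w) = w.length := by
  induction w using FreeMonoid.inductionOn' with
  | one => rw [map_one, ell_one]; rfl
  | of_mul x w ih =>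
      rw [map_mul, ell_mul]
      have h1 : PresentedMonoid.mk (structRels op) (FreeMonoid.of x)
          = PresentedMonoid.of (structRels op) x := rfl
      rw [h1, ell_of, FreeMonoid.length_mul, FreeMonoid.length_of, ih]

lemma ell_eq_zero {m : PresentedMonoid (structRels op)} (h : ell hRC hL m = 0) : m = 1 := by
  obtain ⟨w, rfl⟩ := PresentedMonoid.surjective_mk (rels := structRels op) m
  rw [ell_mk] at h
  rw [FreeMonoid.length_eq_zero.mp h, map_one]

lemma ell_eq_one {m : PresentedMonoid (structRels op)} (h : ell hRC hL m = 1) :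
    ∃ z : X, m = PresentedMonoid.of (structRels op) z := by
  obtain ⟨w, rfl⟩ := PresentedMonoid.surjective_mk (rels := structRels op) m
  rw [ell_mk] at h
  obtain ⟨z, rfl⟩ := FreeMonoid.length_eq_one.mp h
  exact ⟨z, rfl⟩

end Phi

/-! ### The `ν`-calculus -/

section Nu

variable {X : Type*} [Fintype X] [DecidableEq X] {op : X → X → X}
  (hRC : ∀ x y z : X, op (op x y) (op x z) = op (op y x) (op y z))
  (hL : ∀ x : X, Function.Bijective (op x))
  {ν : (X → ℕ) → PresentedMonoid (structRels op)}
  (hν : Function.Bijective ν) (hone : ν 0 = 1)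
  (hof : ∀ x : X, ν (Pi.single x 1) = PresentedMonoid.of (structRels op) x)
  (hcompat : ∀ u v : X → ℕ, (∀ x : X, u x ≤ v x) ↔ ∃ g, ν v = ν u * g)

include hRC hL hν hone hof hcompat

lemma nu_chain : ∀ (d : ℕ) (u v : X → ℕ), (∀ x, u x ≤ v x) → (∑ x, v x) = (∑ x, u x) + d →
    ell hRC hL (ν u) + d ≤ ell hRC hL (ν v) := by
  intro d
  induction d with
  | zero =>
      intro u v hle hsum
      have huv : u = v := by
        funext t
        by_contra hne
        have hlt : u t < v t := lt_of_le_of_ne (hle t) hne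
        have : ∑ x, u x < ∑ x, v x :=
          Finset.sum_lt_sum (fun i _ => hle i) ⟨t, Finset.mem_univ t, hlt⟩
        omega
      rw [huv]
      omega
  | succ d ih =>
      intro u v hle hsum
      have hz : ∃ z, u z < v z := by
        by_contra hno
        push_neg at hno
        have : ∑ x, v x ≤ ∑ x, u x := Finset.sum_le_sum (fun i _ => hno i)
        omega
      obtain ⟨z, hzlt⟩ := hz
      set u' : X → ℕ := u + Pi.single z 1 with hu'
      have hle1 : ∀ x, u x ≤ u' x := by
        intro x
        simp [hu']
      have hle2 : ∀ x, u' x ≤ v x := by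
        intro x
        rcases eq_or_ne x z with rfl | hne
        · simp only [hu', Pi.add_apply, Pi.single_eq_same]
          omega
        · simp only [hu', Pi.add_apply, Pi.single_eq_of_ne hne, add_zero]
          exact hle x
      have hsum' : (∑ x, u' x) = (∑ x, u x) + 1 := by
        simp only [hu', Pi.add_apply]
        rw [Finset.sum_add_distrib]
        congr 1
        simp [Pi.single_apply]
      obtain ⟨g, hg⟩ := (hcompat u u').mp hle1
      have hgne : g ≠ 1 := by
        intro h
        rw [h, mul_one] at hg
        have h2 : u' = u := hν.injective hg
        have := congrFun h2 z
        simp [hu'] at this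
      have hgell : 1 ≤ ell hRC hL g := by
        by_contra hc
        exact hgne (ell_eq_zero hRC hL (by omega))
      have hell : ell hRC hL (ν u) + 1 ≤ ell hRC hL (ν u') := by
        rw [hg, ell_mul]
        omega
      have := ih u' v hle2 (by omega)
      omega

lemma nu_ell_ge (u : X → ℕ) : (∑ x, u x) ≤ ell hRC hL (ν u) := by
  have := nu_chain hRC hL hν hone hof hcompat (∑ x, u x) 0 u (fun x => Nat.zero_le _) (by simp)
  rw [hone, ell_one] at this
  omega

lemma single_le_of (u : X → ℕ) (x : X) {k : ℕ} (h : k ≤ u x) :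
    ∀ t, (Pi.single (M := fun _ => ℕ) x k) t ≤ u t := by
  intro t
  rcases eq_or_ne t x with rfl | hne
  · rwa [Pi.single_eq_same]
  · rw [Pi.single_eq_of_ne hne]
    exact Nat.zero_le _

lemma nu_single : ∀ (k : ℕ) (x : X), ν (Pi.single x k) = Eel op k x := by
  intro k
  induction k with
  | zero =>
      intro x
      rw [show (Pi.single x 0 : X → ℕ) = 0 from Pi.single_zero x, hone, Eel_zero]
  | succ k ih =>
      intro x
      obtain ⟨w, hw⟩ := hν.surjective (Eel op (k+1) x)
      have h1 : ∀ t, (Pi.single (M := fun _ => ℕ) x k) t ≤ w t := by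
        refine (hcompat _ w).mpr ⟨PresentedMonoid.of (structRels op) (eE op k x), ?_⟩
        rw [hw, Eel_succ, ih]
      have h2 : (∑ t, w t) ≤ k + 1 := by
        have := nu_ell_ge hRC hL hν hone hof hcompat w
        rw [hw, ell_Eel] at this
        omega
      have h3 : ∀ z, z ≠ x → w z = 0 := by
        intro z hzx
        by_contra hc
        have hle : ∀ t, (Pi.single (M := fun _ => ℕ) z 1) t ≤ w t :=
          single_le_of hRC hL hν hone hof hcompat w z (k := 1) (by omega)
        obtain ⟨g, hg⟩ := (hcompat (Pi.single z 1) w).mp hle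
        rw [hof] at hg
        have hv1 : 1 ≤ (Pi.single (M := fun _ => ℕ) x (k+1)) z := by
          rw [← phiH_Eel_vec hRC hL (k+1) x, ← hw, hg, map_mul, phiH_of]
          simp only [SD.mul_vec, Pi.add_apply, Pi.single_eq_same]
          exact Nat.le_add_right 1 _
        rw [Pi.single_eq_of_ne hzx] at hv1
        omega
      have h4 : w x ≤ ∑ t, w t :=
        Finset.single_le_sum (f := w) (fun i _ => Nat.zero_le _) (Finset.mem_univ x)
      have h5 : k ≤ w x := by
        have := h1 x
        rwa [Pi.single_eq_same] at this
      have h6 : w x ≠ k := by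
        intro hk
        have hwk : w = Pi.single x k := by
          funext t
          rcases eq_or_ne t x with rfl | hne
          · rw [Pi.single_eq_same, hk]
          · rw [Pi.single_eq_of_ne hne, h3 t hne]
        rw [hwk, ih] at hw
        have := congrArg (ell hRC hL) hw
        rw [ell_Eel, ell_Eel] at this
        omega
      have h7 : w = Pi.single x (k+1) := by
        funext t
        rcases eq_or_ne t x with rfl | hne
        · rw [Pi.single_eq_same]
          omega
        · rw [Pi.single_eq_of_ne hne, h3 t hne]
      rw [← h7, hw]

lemma nu_vec_ge (u : X → ℕ) (x : X) : u x ≤ (phiH op hRC hL (ν u)).vec x := by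
  obtain ⟨g, hg⟩ := (hcompat (Pi.single x (u x)) u).mp
    (single_le_of hRC hL hν hone hof hcompat u x le_rfl)
  rw [hg, nu_single hRC hL hν hone hof hcompat, map_mul]
  simp only [SD.mul_vec, Pi.add_apply]
  rw [phiH_Eel_vec, Pi.single_eq_same]
  omega

end Nu

/-! ### The central element `Z = ν(const p)` and exact length/vector computations -/

/-- The product of all `E p x`. -/
noncomputable def Zel {X : Type*} [Fintype X] [DecidableEq X] (op : X → X → X) (p : ℕ) :
    PresentedMonoid (structRels op) :=
  ((Finset.univ.toList (α := X)).map (Eel op p)).prod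

section Z

variable {X : Type*} [Fintype X] [DecidableEq X] {op : X → X → X}

variable (hRC : ∀ x y z : X, op (op x y) (op x z) = op (op y x) (op y z))
  (hL : ∀ x : X, Function.Bijective (op x))
  (p : ℕ) (hclass : ∀ x y : X, PiAux op (List.replicate p x) y = y)

include hclass in
lemma zlist (L : List X) :
    (phiH op hRC hL ((L.map (Eel op p)).prod)).perm = 1 ∧
      (phiH op hRC hL ((L.map (Eel op p)).prod)).vec
        = (L.map (fun x => Pi.single (M := fun _ => ℕ) x p)).sum := by
  induction L with
  | nil =>
      constructor
      · rw [List.map_nil, List.prod_nil, map_one]; rfl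
      · rw [List.map_nil, List.prod_nil, map_one]; rfl
  | cons a L ih =>
      simp only [List.map_cons, List.prod_cons, List.sum_cons, map_mul]
      constructor
      · rw [SD.mul_perm, phiH_Eel_perm_one hRC hL p hclass, ih.1, one_mul]
      · funext z
        rw [SD.mul_vec]
        simp only [Pi.add_apply]
        rw [phiH_Eel_vec, phiH_Eel_perm_one hRC hL p hclass, ih.2]
        simp

include hRC hclass in
lemma commList (c : X) (L : List X) :
    Commute (Eel op p c) ((L.map (Eel op p)).prod) := by
  induction L with
  | nil => exact Commute.one_right _
  | cons a L ih =>
      rw [List.map_cons, List.prod_cons]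
      exact Commute.mul_right (ecomm p hclass hRC a c) ih

include hclass in
lemma Zel_perm : (phiH op hRC hL (Zel op p)).perm = 1 :=
  (zlist hRC hL p hclass _).1

include hclass in
lemma Zel_vec : (phiH op hRC hL (Zel op p)).vec = fun _ => p := by
  rw [Zel, (zlist hRC hL p hclass _).2]
  have h1 : ((Finset.univ.toList (α := X)).map
      (fun x => Pi.single (M := fun _ => ℕ) x p)).sum
      = ∑ x : X, Pi.single (M := fun _ => ℕ) x p :=
    Finset.sum_map_toList _ _
  rw [h1]
  exact Finset.univ_sum_single (fun _ => p)

include hclass in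
lemma ell_Zel : ell hRC hL (Zel op p) = Fintype.card X * p := by
  unfold ell
  rw [Zel_vec hRC hL p hclass]
  simp [Finset.sum_const, mul_comm]

include hRC hclass in
lemma Zel_div (x : X) : ∃ C, Zel op p = Eel op p x * C ∧ Commute (Eel op p x) C := by
  have hx : x ∈ Finset.univ.toList (α := X) := Finset.mem_toList.mpr (Finset.mem_univ x)
  obtain ⟨s, t, hst⟩ := List.append_of_mem hx
  refine ⟨(s.map (Eel op p)).prod * (t.map (Eel op p)).prod, ?_, ?_⟩
  · rw [Zel, hst, List.map_append, List.prod_append, List.map_cons, List.prod_cons,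
      ← mul_assoc, ← (commList hRC p hclass x s).eq, mul_assoc]
  · exact Commute.mul_right (commList hRC p hclass x s) (commList hRC p hclass x t)

include hRC hclass in
lemma Zel_pow_div (x : X) (k : ℕ) : ∃ C, Zel op p ^ k = Eel op p x ^ k * C := by
  obtain ⟨C, hC, hcomm⟩ := Zel_div hRC p hclass x
  exact ⟨C ^ k, by rw [hC, hcomm.mul_pow]⟩

omit [Fintype X] in
lemma Eel_add (a b : ℕ) (x : X) :
    Eel op (a + b) x
      = Eel op a x
        * ((List.range b).map (fun j => PresentedMonoid.of (structRels op) (eE op (a+j) x))).prod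
    := by
  unfold Eel
  rw [List.range_add, List.map_append, List.prod_append, List.map_map]
  rfl

omit [Fintype X] in
include hclass in
lemma Eel_pow (k : ℕ) (x : X) : Eel op p x ^ k = Eel op (k * p) x := by
  induction k with
  | zero => rw [pow_zero, Nat.zero_mul, Eel_zero]
  | succ k ih =>
      rw [pow_succ, ih, show (k+1) * p = k * p + p from by ring, Eel_add]
      congr 1
      have hmap : (List.range p).map (fun j => PresentedMonoid.of (structRels op)
          (eE op (k*p + j) x)) = (List.range p).map (fun j => PresentedMonoid.of (structRels op)
          (eE op j x)) := by
        refine List.map_congr_left fun j _ => ?_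
        rw [show k*p + j = j + k*p from by ring, eE_add_mul_p p hclass]
      rw [hmap]
      rfl

end Z

/-! ### Exact values: `ℓ(ν u) = Σu`, `α(ν u) = u`, and cancellativity -/

section Exact

variable {X : Type*} [Fintype X] [DecidableEq X] {op : X → X → X}
  (hRC : ∀ x y z : X, op (op x y) (op x z) = op (op y x) (op y z))
  (hL : ∀ x : X, Function.Bijective (op x))
  (p : ℕ) (hp : 2 ≤ p) (hclass : ∀ x y : X, PiAux op (List.replicate p x) y = y)
  {ν : (X → ℕ) → PresentedMonoid (structRels op)}
  (hν : Function.Bijective ν) (hone : ν 0 = 1)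
  (hof : ∀ x : X, ν (Pi.single x 1) = PresentedMonoid.of (structRels op) x)
  (hcompat : ∀ u v : X → ℕ, (∀ x : X, u x ≤ v x) ↔ ∃ g, ν v = ν u * g)

include hRC hL hp hclass hν hone hof hcompat

lemma nu_const (k : ℕ) : ν (fun _ => k * p) = Zel op p ^ k := by
  obtain ⟨w, hw⟩ := hν.surjective (Zel op p ^ k)
  have h2 : ∀ t, k * p ≤ w t := by
    intro t
    have h1 : ∀ s, (Pi.single (M := fun _ => ℕ) t (k*p)) s ≤ w s := by
      refine (hcompat _ w).mpr ?_
      obtain ⟨C, hC⟩ := Zel_pow_div hRC p hclass t k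
      refine ⟨C, ?_⟩
      rw [hw, hC, Eel_pow p hclass, nu_single hRC hL hν hone hof hcompat]
    have := h1 t
    rwa [Pi.single_eq_same] at this
  have h3 : (∑ t, w t) ≤ Fintype.card X * (k * p) := by
    have h := nu_ell_ge hRC hL hν hone hof hcompat w
    rw [hw, ell_pow, ell_Zel hRC hL p hclass] at h
    calc (∑ t, w t) ≤ k * (Fintype.card X * p) := h
      _ = Fintype.card X * (k * p) := by ring
  have h4 : ∀ t, w t = k * p := by
    intro t
    by_contra hne
    have hlt : k*p < w t := lt_of_le_of_ne (h2 t) (Ne.symm hne)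
    have hs : ∑ _t : X, k * p < ∑ t, w t :=
      Finset.sum_lt_sum (fun i _ => h2 i) ⟨t, Finset.mem_univ t, hlt⟩
    rw [Finset.sum_const, smul_eq_mul, Finset.card_univ] at hs
    omega
  rw [← hw]
  congr 1
  funext t
  exact (h4 t).symm

lemma nu_ell (u : X → ℕ) : ell hRC hL (ν u) = ∑ x, u x := by
  have hge := nu_ell_ge hRC hL hν hone hof hcompat u
  set k := Finset.univ.sup u with hk
  have hub : ∀ x, u x ≤ k * p := by
    intro x
    calc u x ≤ k := Finset.le_sup (Finset.mem_univ x)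
      _ = k * 1 := (mul_one k).symm
      _ ≤ k * p := Nat.mul_le_mul_left k (by omega)
  set S : ℕ := ∑ x, u x with hS
  set T : ℕ := ∑ _x : X, k * p with hT
  have hsle : S ≤ T := Finset.sum_le_sum fun i _ => hub i
  have hZ : ell hRC hL (ν (fun _ => k * p)) = T := by
    rw [nu_const hRC hL p hp hclass hν hone hof hcompat k, ell_pow,
      ell_Zel hRC hL p hclass, hT, Finset.sum_const, smul_eq_mul, Finset.card_univ]
    ring
  have hchain := nu_chain hRC hL hν hone hof hcompat (T - S) u
    (fun _ => k * p) hub (by show T = S + (T - S); omega)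
  omega

lemma nu_vec (u : X → ℕ) : (phiH op hRC hL (ν u)).vec = u := by
  funext t
  have hge : ∀ x, u x ≤ (phiH op hRC hL (ν u)).vec x :=
    fun x => nu_vec_ge hRC hL hν hone hof hcompat u x
  have hsum : ∑ x, (phiH op hRC hL (ν u)).vec x = ∑ x, u x :=
    nu_ell hRC hL p hp hclass hν hone hof hcompat u
  by_contra hne
  have hlt : u t < (phiH op hRC hL (ν u)).vec t := lt_of_le_of_ne (hge t) (Ne.symm hne)
  have : ∑ x, u x < ∑ x, (phiH op hRC hL (ν u)).vec x :=
    Finset.sum_lt_sum (fun i _ => hge i) ⟨t, Finset.mem_univ t, hlt⟩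
  omega

lemma phi_inj {m m' : PresentedMonoid (structRels op)}
    (h : (phiH op hRC hL m).vec = (phiH op hRC hL m').vec) : m = m' := by
  obtain ⟨a, ha⟩ := hν.surjective m
  obtain ⟨b, hb⟩ := hν.surjective m'
  rw [← ha, ← hb] at h ⊢
  rw [nu_vec hRC hL p hp hclass hν hone hof hcompat a,
    nu_vec hRC hL p hp hclass hν hone hof hcompat b] at h
  rw [h]

lemma cancel_left {a b c : PresentedMonoid (structRels op)} (h : a * b = a * c) : b = c := by
  have h' := congrArg (phiH op hRC hL) h
  rw [map_mul, map_mul] at h'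
  have hvec : (phiH op hRC hL b).vec = (phiH op hRC hL c).vec := by
    have hv := congrArg SD.vec h'
    simp only [SD.mul_vec] at hv
    have h2 := add_left_cancel hv
    funext z
    have h3 := congrFun h2 ((phiH op hRC hL a).perm z)
    simpa using h3
  exact phi_inj hRC hL p hp hclass hν hone hof hcompat hvec

lemma cancel_right {a b c : PresentedMonoid (structRels op)} (h : a * c = b * c) : a = b := by
  have h' := congrArg (phiH op hRC hL) h
  rw [map_mul, map_mul] at h'
  have hperm : (phiH op hRC hL a).perm = (phiH op hRC hL b).perm := by
    have hq := congrArg SD.perm h'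
    simp only [SD.mul_perm] at hq
    exact mul_right_cancel hq
  have hvec : (phiH op hRC hL a).vec = (phiH op hRC hL b).vec := by
    have hv := congrArg SD.vec h'
    simp only [SD.mul_vec, hperm] at hv
    exact add_right_cancel hv
  exact phi_inj hRC hL p hp hclass hν hone hof hcompat hvec

end Exact

/-! ### Quasi-centrality of `Δ = ν(const (p-1))` -/

section Delta

variable {X : Type*} [Fintype X] [DecidableEq X] {op : X → X → X}
  (hRC : ∀ x y z : X, op (op x y) (op x z) = op (op y x) (op y z))
  (hL : ∀ x : X, Function.Bijective (op x))
  (p : ℕ) (hp : 2 ≤ p) (hclass : ∀ x y : X, PiAux op (List.replicate p x) y = y)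
  {ν : (X → ℕ) → PresentedMonoid (structRels op)}
  (hν : Function.Bijective ν) (hone : ν 0 = 1)
  (hof : ∀ x : X, ν (Pi.single x 1) = PresentedMonoid.of (structRels op) x)
  (hcompat : ∀ u v : X → ℕ, (∀ x : X, u x ≤ v x) ↔ ∃ g, ν v = ν u * g)

include hRC hL hp hclass hν hone hof hcompat

lemma qagen (y : X) : ∃ g, PresentedMonoid.of (structRels op) y * ν (fun _ => p - 1)
    = ν (fun _ => p - 1) * g := by
  obtain ⟨w, hw⟩ := hν.surjective
    (PresentedMonoid.of (structRels op) y * ν (fun _ => p - 1))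
  have key : ∀ xt t, (Pi.single (M := fun _ => ℕ) xt (p-1)) t ≤ w t := by
    intro xt
    obtain ⟨c, hc⟩ := (hcompat (Pi.single (op y xt) (p-1)) (fun _ => p - 1)).mp
      (single_le_of hRC hL hν hone hof hcompat (fun _ => p - 1) (op y xt) le_rfl)
    refine (hcompat _ w).mpr
      ⟨PresentedMonoid.of (structRels op) (piE op (p-1) xt y) * c, ?_⟩
    rw [hw, hc, nu_single hRC hL hν hone hof hcompat (p-1) (op y xt),
      nu_single hRC hL hν hone hof hcompat (p-1) xt,
      ← mul_assoc, ← mul_assoc, ← qc hRC (p-1) xt y]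
  have hconst : ∀ t, (fun _ => p - 1) t ≤ w t := by
    intro t
    have := key t t
    rwa [Pi.single_eq_same] at this
  obtain ⟨g, hg⟩ := (hcompat (fun _ => p - 1) w).mp hconst
  exact ⟨g, by rw [← hw, ← hg]⟩

lemma qa (m : PresentedMonoid (structRels op)) :
    ∃ g, m * ν (fun _ => p - 1) = ν (fun _ => p - 1) * g := by
  induction m using PresentedMonoid.inductionOn with
  | h a =>
    induction a using FreeMonoid.inductionOn' with
    | one => exact ⟨1, by rw [map_one, one_mul, mul_one]⟩
    | of_mul b a ih =>
        obtain ⟨ga, hga⟩ := ih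
        obtain ⟨gb, hgb⟩ := qagen hRC hL p hp hclass hν hone hof hcompat b
        refine ⟨gb * ga, ?_⟩
        have hsplit : PresentedMonoid.mk (structRels op) (FreeMonoid.of b * a)
            = PresentedMonoid.of (structRels op) b * PresentedMonoid.mk (structRels op) a :=
          map_mul _ _ _
        rw [hsplit, mul_assoc, hga, ← mul_assoc, hgb, mul_assoc]

lemma theta (y : X) : ∃ y' : X, PresentedMonoid.of (structRels op) y * ν (fun _ => p - 1)
    = ν (fun _ => p - 1) * PresentedMonoid.of (structRels op) y' := by
  obtain ⟨g, hg⟩ := qagen hRC hL p hp hclass hν hone hof hcompat y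
  have hell : ell hRC hL g = 1 := by
    have h1 := congrArg (ell hRC hL) hg
    rw [ell_mul, ell_mul, ell_of] at h1
    omega
  obtain ⟨z, rfl⟩ := ell_eq_one hRC hL hell
  exact ⟨z, hg⟩

lemma of_inj {a b : X} (h : PresentedMonoid.of (structRels op) a
    = PresentedMonoid.of (structRels op) b) : a = b := by
  rw [← hof, ← hof] at h
  have h2 := hν.injective h
  by_contra hne
  have h3 := congrFun h2 a
  rw [Pi.single_eq_same, Pi.single_eq_of_ne hne] at h3
  omega

lemma qb (m : PresentedMonoid (structRels op)) :
    ∃ m₀, m₀ * ν (fun _ => p - 1) = ν (fun _ => p - 1) * m := by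
  classical
  have hθex := theta hRC hL p hp hclass hν hone hof hcompat
  choose θ hθ using hθex
  have hinj : Function.Injective θ := by
    intro a b hab
    have h1 : PresentedMonoid.of (structRels op) a * ν (fun _ => p - 1)
        = PresentedMonoid.of (structRels op) b * ν (fun _ => p - 1) := by
      rw [hθ a, hθ b, hab]
    exact of_inj hRC hL p hp hclass hν hone hof hcompat
      (cancel_right hRC hL p hp hclass hν hone hof hcompat h1)
  have hsurj : Function.Surjective θ := Finite.injective_iff_surjective.mp hinj
  induction m using PresentedMonoid.inductionOn with
  | h a =>
    induction a using FreeMonoid.inductionOn' with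
    | one => exact ⟨1, by rw [map_one, one_mul, mul_one]⟩
    | of_mul b a ih =>
        obtain ⟨m₀, hm₀⟩ := ih
        obtain ⟨b₀, hb₀⟩ := hsurj b
        refine ⟨PresentedMonoid.of (structRels op) b₀ * m₀, ?_⟩
        have hsplit : PresentedMonoid.mk (structRels op) (FreeMonoid.of b * a)
            = PresentedMonoid.of (structRels op) b * PresentedMonoid.mk (structRels op) a :=
          map_mul _ _ _
        rw [hsplit, mul_assoc, hm₀, ← mul_assoc]
        have := hθ b₀
        rw [hb₀] at this
        rw [this, mul_assoc]

end Delta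

end Stmt13Aux


open Stmt13Aux in
/-- in the structure monoid of a finite RC-quasigroup of class `p ≥ 2`, with
`Δ = ν(∏_{x∈X} x^{p-1})`, the left-divisors of `Δ` coincide with its right-divisors, and `Δ`
is a Garside element: its divisors are finite in number and generate the monoid (in
particular every generator `x ∈ X` divides `Δ`). -/
theorem stmt13 {X : Type*} [Fintype X] [DecidableEq X] (op : X → X → X)
    (hRC : ∀ x y z : X, op (op x y) (op x z) = op (op y x) (op y z))
    (hL : ∀ x : X, Function.Bijective (op x))
    (p : ℕ) (hp : 2 ≤ p)
    (hclass : ∀ x y : X, PiAux op (List.replicate p x) y = y)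
    (ν : (X → ℕ) → PresentedMonoid (structRels op))
    (hν : Function.Bijective ν) (hone : ν 0 = 1)
    (hof : ∀ x : X, ν (Pi.single x 1) = PresentedMonoid.of (structRels op) x)
    (hcompat : ∀ u v : X → ℕ, (∀ x : X, u x ≤ v x) ↔ ∃ g, ν v = ν u * g) :
    {g : PresentedMonoid (structRels op) | ∃ h, g * h = ν (fun _ => p - 1)}
        = {g : PresentedMonoid (structRels op) | ∃ h, h * g = ν (fun _ => p - 1)} ∧
      Set.Finite {g : PresentedMonoid (structRels op) | ∃ h, g * h = ν (fun _ => p - 1)} ∧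
      Submonoid.closure {g : PresentedMonoid (structRels op) | ∃ h, g * h = ν (fun _ => p - 1)}
        = ⊤ ∧
      ∀ x : X, ∃ h, PresentedMonoid.of (structRels op) x * h = ν (fun _ => p - 1) := by
  classical
  have t4 : ∀ x : X, ∃ h, PresentedMonoid.of (structRels op) x * h = ν (fun _ => p - 1) := by
    intro x
    obtain ⟨g, hg⟩ := (hcompat (Pi.single x 1) (fun _ => p - 1)).mp
      (single_le_of hRC hL hν hone hof hcompat (fun _ => p - 1) x (k := 1) (by show 1 ≤ p - 1; omega))
    rw [hof] at hg
    exact ⟨g, hg.symm⟩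
  have t1 : {g : PresentedMonoid (structRels op) | ∃ h, g * h = ν (fun _ => p - 1)}
      = {g : PresentedMonoid (structRels op) | ∃ h, h * g = ν (fun _ => p - 1)} := by
    ext g
    constructor
    · rintro ⟨h, hgh⟩
      obtain ⟨h₀, hh₀⟩ := qb hRC hL p hp hclass hν hone hof hcompat h
      refine ⟨h₀, ?_⟩
      have hkey : (h₀ * g) * h = ν (fun _ => p - 1) * h := by
        rw [mul_assoc, hgh, hh₀]
      exact cancel_right hRC hL p hp hclass hν hone hof hcompat hkey
    · rintro ⟨h, hhg⟩
      obtain ⟨h', hh'⟩ := qa hRC hL p hp hclass hν hone hof hcompat h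
      refine ⟨h', ?_⟩
      have hkey : h * ν (fun _ => p - 1) = h * (g * h') := by
        rw [hh', ← hhg, mul_assoc]
      exact (cancel_left hRC hL p hp hclass hν hone hof hcompat hkey).symm
  have t2 : Set.Finite {g : PresentedMonoid (structRels op) | ∃ h, g * h = ν (fun _ => p - 1)}
      := by
    have hsub : {g : PresentedMonoid (structRels op) | ∃ h, g * h = ν (fun _ => p - 1)}
        ⊆ ν '' {u : X → ℕ | ∀ x, u x ≤ p - 1} := by
      rintro g ⟨h, hgh⟩
      obtain ⟨u, rfl⟩ := hν.surjective g
      exact ⟨u, (hcompat u (fun _ => p - 1)).mpr ⟨h, hgh.symm⟩, rfl⟩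
    refine Set.Finite.subset (Set.Finite.image ν ?_) hsub
    have hsub2 : {u : X → ℕ | ∀ x, u x ≤ p - 1}
        ⊆ Set.pi Set.univ (fun _ : X => Set.Iic (p - 1)) := by
      intro u hu x _
      exact hu x
    exact Set.Finite.subset (Set.Finite.pi fun _ => Set.finite_Iic _) hsub2
  have t3 : Submonoid.closure
      {g : PresentedMonoid (structRels op) | ∃ h, g * h = ν (fun _ => p - 1)} = ⊤ := by
    rw [eq_top_iff, ← PresentedMonoid.closure_range_of (structRels op)]
    apply Submonoid.closure_mono
    rintro _ ⟨x, rfl⟩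
    exact t4 x
  exact ⟨t1, t2, t3, t4⟩
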